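/- arXiv:2001.07502 — 6 statements merged into one kernel-verified Lean document; each statement's English description precedes it below -/
import Mathlib

section
/- Let E be a metric space and x : ℝ → E a continuous function. If x is Bohr almost periodic, then the set {x(t) : t ∈ ℝ} is totally bounded (relatively compact when E is complete). -/
def RelativelyDense (A : Set ℝ) : Prop :=
  ∃ l > 0, ∀ t : ℝ, ∃ a ∈ A, a ∈ Set.Icc t (t + l)

/-- Bohr almost periodicity of a continuous function into a metric space. -/
def IsBohrAlmostPeriodic {E : Type*} [MetricSpace E] (x : ℝ → E) : Prop :=
  Continuous x ∧
    ∀ ε > 0, RelativelyDense {τ : ℝ | ∀ t : ℝ, dist (x t) (x (t + τ)) ≤ ε}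

theorem totallyBounded_range_of_bohrAlmostPeriodic {E : Type*} [MetricSpace E]
    (x : ℝ → E) (hx : IsBohrAlmostPeriodic x) :
    TotallyBounded (Set.range x) := by
  obtain ⟨hc, hap⟩ := hx
  rw [Metric.totallyBounded_iff]
  intro ε hε
  obtain ⟨l, hl, hrel⟩ := hap (ε / 3) (by linarith)
  have hK : IsCompact (x '' Set.Icc 0 l) := isCompact_Icc.image hc
  obtain ⟨s, hsfin, hcov⟩ := Metric.totallyBounded_iff.mp hK.totallyBounded (ε / 3) (by linarith)
  refine ⟨s, hsfin, ?_⟩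
  rintro _ ⟨t, rfl⟩
  obtain ⟨τ, hτ, hτmem⟩ := hrel (-t)
  have hmem : x (t + τ) ∈ x '' Set.Icc 0 l := by
    refine ⟨t + τ, ⟨by linarith [hτmem.1], by linarith [hτmem.2]⟩, rfl⟩
  obtain ⟨y, hy, hyd⟩ := Set.mem_iUnion₂.mp (hcov hmem)
  refine Set.mem_iUnion₂.mpr ⟨y, hy, ?_⟩
  have h1 : dist (x t) (x (t + τ)) ≤ ε / 3 := hτ t
  have h2 : dist (x (t + τ)) y < ε / 3 := Metric.mem_ball.mp hyd
  calc dist (x t) y ≤ dist (x t) (x (t + τ)) + dist (x (t + τ)) y := dist_triangle _ _ _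
    _ < ε := by linarith
end

section
/- Let E be a metric space and x : ℝ → E Bohr almost periodic. Then x is uniformly continuous on ℝ. -/
theorem uniformContinuous_of_bohrAlmostPeriodic {E : Type*} [MetricSpace E]
    (x : ℝ → E) (hx : IsBohrAlmostPeriodic x) :
    UniformContinuous x := by
  rw [Metric.uniformContinuous_iff]
  intro ε hε
  obtain ⟨l, hl, hrel⟩ := hx.2 (ε / 3) (by linarith)
  have hK : IsCompact (Set.Icc (-1 : ℝ) (l + 1)) := isCompact_Icc
  have hUC := hK.uniformContinuousOn_of_continuous hx.1.continuousOn
  rw [Metric.uniformContinuousOn_iff] at hUC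
  obtain ⟨δ₀, hδ₀, hδ⟩ := hUC (ε / 3) (by linarith)
  refine ⟨min δ₀ 1, lt_min hδ₀ one_pos, fun {a b} hab => ?_⟩
  obtain ⟨τ, hτA, hτmem⟩ := hrel (-a)
  have ha1 : a + τ ∈ Set.Icc (-1 : ℝ) (l + 1) := by
    constructor <;> [linarith [hτmem.1]; linarith [hτmem.2]]
  have habs : |b - a| < 1 := by
    have := lt_of_lt_of_le hab (min_le_right _ _)
    rw [Real.dist_eq] at this; rw [abs_sub_comm]; exact this
  rw [abs_lt] at habs
  have hb1 : b + τ ∈ Set.Icc (-1 : ℝ) (l + 1) := by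
    constructor <;> [linarith [hτmem.1]; linarith [hτmem.2]]
  have hmid : dist (x (a + τ)) (x (b + τ)) < ε / 3 := by
    apply hδ _ ha1 _ hb1
    have : dist (a + τ) (b + τ) = dist a b := by
      rw [Real.dist_eq, Real.dist_eq]; ring_nf
    rw [this]
    exact lt_of_lt_of_le hab (min_le_left _ _)
  calc dist (x a) (x b)
      ≤ dist (x a) (x (a + τ)) + dist (x (a + τ)) (x (b + τ)) +
        dist (x (b + τ)) (x b) := dist_triangle4 _ _ _ _
    _ < ε / 3 + ε / 3 + ε / 3 := by
        have h1 := hτA a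
        have h2 := hτA b
        rw [dist_comm] at h2
        linarith
    _ = ε := by ring
end

section
/- Let E, F, G be metric spaces and x : ℝ → E, y : ℝ → F, z : ℝ → G continuous functions. Then x, y and z are each Bohr almost periodic if and only if the function t ↦ (x(t), y(t), z(t)) with values in E × F × G is Bohr almost periodic. -/
lemma RelativelyDense.mono {A B : Set ℝ} (h : RelativelyDense A) (hAB : A ⊆ B) :
    RelativelyDense B := by
  obtain ⟨l, hl, h⟩ := h
  exact ⟨l, hl, fun t => by obtain ⟨a, ha, hab⟩ := h t; exact ⟨a, hAB ha, hab⟩⟩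

/-- A Bohr almost periodic function is uniformly continuous. -/
lemma IsBohrAlmostPeriodic.unifCont {E : Type*} [MetricSpace E] {f : ℝ → E}
    (hf : IsBohrAlmostPeriodic f) {ε : ℝ} (hε : 0 < ε) :
    ∃ δ > 0, ∀ u v : ℝ, |u - v| ≤ δ → dist (f u) (f v) ≤ ε := by
  obtain ⟨hc, hap⟩ := hf
  obtain ⟨l, hl, hper⟩ := hap (ε/3) (by linarith)
  have hUC : UniformContinuousOn f (Set.Icc (-1:ℝ) (l+1)) :=
    (isCompact_Icc).uniformContinuousOn_of_continuous hc.continuousOn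
  rw [Metric.uniformContinuousOn_iff_le] at hUC
  obtain ⟨δ, hδ, hUC⟩ := hUC (ε/3) (by linarith)
  refine ⟨min δ 1, by positivity, fun u v huv => ?_⟩
  obtain ⟨τ, hτ, hτmem⟩ := hper (-u)
  have hτ' : ∀ t : ℝ, dist (f t) (f (t + τ)) ≤ ε/3 := hτ
  have h1 : u + τ ∈ Set.Icc (-1:ℝ) (l+1) := by
    obtain ⟨ha, hb⟩ := hτmem; constructor <;> nlinarith
  have huv1 : |u - v| ≤ 1 := le_trans huv (min_le_right _ _)
  have huvδ : |u - v| ≤ δ := le_trans huv (min_le_left _ _)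
  have h2 : v + τ ∈ Set.Icc (-1:ℝ) (l+1) := by
    obtain ⟨ha, hb⟩ := hτmem
    have := abs_le.1 huv1
    constructor <;> nlinarith [this.1, this.2]
  have hmid : dist (f (u + τ)) (f (v + τ)) ≤ ε/3 := by
    apply hUC _ h1 _ h2
    rw [Real.dist_eq]
    simpa using huvδ
  calc dist (f u) (f v)
      ≤ dist (f u) (f (u + τ)) + dist (f (u + τ)) (f (v + τ)) + dist (f (v + τ)) (f v) :=
        dist_triangle4 _ _ _ _
    _ ≤ ε/3 + ε/3 + ε/3 := by
        gcongr
        · exact hτ' u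
        · rw [dist_comm]; exact hτ' v
    _ = ε := by ring

/-- Common almost periods of two Bohr a.p. functions are relatively dense. -/
lemma common_almost_periods {E F : Type*} [MetricSpace E] [MetricSpace F]
    {f : ℝ → E} {g : ℝ → F}
    (hf : IsBohrAlmostPeriodic f) (hg : IsBohrAlmostPeriodic g) {ε : ℝ} (hε : 0 < ε) :
    RelativelyDense {τ : ℝ | ∀ t : ℝ,
      dist (f t) (f (t + τ)) ≤ ε ∧ dist (g t) (g (t + τ)) ≤ ε} := by
  have hε4 : (0:ℝ) < ε/4 := by linarith
  obtain ⟨δ, hδ, hgδ⟩ := hg.unifCont hε4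
  obtain ⟨l₁, hl₁, hper₁⟩ := hf.2 (ε/4) hε4
  obtain ⟨l₂, hl₂, hper₂⟩ := hg.2 (ε/4) hε4
  set l : ℝ := max l₁ l₂ with hldef
  have hl : 0 < l := lt_of_lt_of_le hl₁ (le_max_left _ _)
  -- select ε/4-almost periods of f and g in each interval [n*l, n*l+l]
  have hsel1 : ∀ n : ℤ, ∃ a : ℝ, (∀ t : ℝ, dist (f t) (f (t + a)) ≤ ε/4) ∧
      a ∈ Set.Icc ((n:ℝ)*l) ((n:ℝ)*l + l) := by
    intro n
    obtain ⟨a, ha, hmem⟩ := hper₁ ((n:ℝ)*l)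
    exact ⟨a, ha, ⟨hmem.1, le_trans hmem.2 (by have := le_max_left l₁ l₂; linarith)⟩⟩
  have hsel2 : ∀ n : ℤ, ∃ a : ℝ, (∀ t : ℝ, dist (g t) (g (t + a)) ≤ ε/4) ∧
      a ∈ Set.Icc ((n:ℝ)*l) ((n:ℝ)*l + l) := by
    intro n
    obtain ⟨a, ha, hmem⟩ := hper₂ ((n:ℝ)*l)
    exact ⟨a, ha, ⟨hmem.1, le_trans hmem.2 (by have := le_max_right l₁ l₂; linarith)⟩⟩
  choose τ₁ hτ₁ hτ₁mem using hsel1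
  choose τ₂ hτ₂ hτ₂mem using hsel2
  set d : ℤ → ℝ := fun n => τ₁ n - τ₂ n with hd
  have hdmem : ∀ n : ℤ, -l ≤ d n ∧ d n ≤ l := by
    intro n
    have h1 := hτ₁mem n; have h2 := hτ₂mem n
    constructor
    · show -l ≤ τ₁ n - τ₂ n; linarith [h1.1, h2.2]
    · show τ₁ n - τ₂ n ≤ l; linarith [h1.2, h2.1]
  -- classes
  set c : ℤ → ℤ := fun n => ⌊(d n + l)/δ⌋ with hc
  set K : ℤ := ⌊2*l/δ⌋ with hK
  have hcmem : ∀ n : ℤ, c n ∈ Finset.Icc (0:ℤ) K := by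
    intro n
    have h := hdmem n
    simp only [Finset.mem_Icc]
    constructor
    · exact Int.le_floor.2 (by push_cast; exact div_nonneg (by linarith [h.1]) hδ.le)
    · exact Int.floor_le_floor ((div_le_div_iff_of_pos_right hδ).2 (by linarith [h.2]))
  -- same class implies close d values
  have hclass : ∀ n m : ℤ, c n = c m → |d n - d m| ≤ δ := by
    intro n m hnm
    have h1 : (c n : ℝ) ≤ (d n + l)/δ := Int.floor_le _
    have h2 : (d n + l)/δ < c n + 1 := Int.lt_floor_add_one _
    have h3 : (c m : ℝ) ≤ (d m + l)/δ := Int.floor_le _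
    have h4 : (d m + l)/δ < c m + 1 := Int.lt_floor_add_one _
    rw [hnm] at h1 h2
    have habs : |(d n + l)/δ - (d m + l)/δ| ≤ 1 := by
      rw [abs_le]; constructor <;> push_cast at h1 h2 h3 h4 ⊢ <;> linarith
    have heq : (d n + l)/δ - (d m + l)/δ = (d n - d m)/δ := by ring
    rw [heq, abs_div, abs_of_pos hδ, div_le_one hδ] at habs
    exact habs
  -- representatives
  have hrep : ∀ k : ℤ, ∃ m : ℤ, (∃ n, c n = k) → c m = k := by
    intro k
    by_cases h : ∃ n, c n = k
    · exact ⟨h.choose, fun _ => h.choose_spec⟩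
    · exact ⟨0, fun h' => absurd h' h⟩
  choose r hr using hrep
  have hKnn : (0:ℤ) ≤ K := by
    rw [hK]; exact Int.le_floor.2 (by push_cast; positivity)
  have hne : (Finset.Icc (0:ℤ) K).Nonempty := ⟨0, by simp [hKnn]⟩
  set N : ℤ := (Finset.Icc (0:ℤ) K).sup' hne (fun k => |r k|) with hN
  have h0mem : (0:ℤ) ∈ Finset.Icc (0:ℤ) K := by simp [hKnn]
  have hNnn : (0:ℤ) ≤ N :=
    le_trans (abs_nonneg (r 0)) (Finset.le_sup' (fun k => |r k|) h0mem)
  have hrbound : ∀ n : ℤ, |r (c n)| ≤ N := fun n =>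
    Finset.le_sup' (fun k => |r k|) (hcmem n)
  have hrclass : ∀ n : ℤ, c (r (c n)) = c n := fun n => hr (c n) ⟨n, rfl⟩
  -- the inclusion length
  have hNR : (0:ℝ) ≤ (N:ℝ) := by exact_mod_cast hNnn
  refine ⟨(2*(N:ℝ)+3)*l, by nlinarith, ?_⟩
  intro t
  set n : ℤ := ⌈t/l⌉ + N + 1 with hn
  set m : ℤ := r (c n) with hm
  have hmN : |m| ≤ N := hrbound n
  have hmN' : -(N:ℝ) ≤ (m:ℝ) ∧ (m:ℝ) ≤ N := by
    constructor <;> [exact_mod_cast (abs_le.1 hmN).1; exact_mod_cast (abs_le.1 hmN).2]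
  set τ : ℝ := τ₁ n - τ₁ m with hτ
  have hnlb : t/l + N + 1 ≤ (n:ℝ) := by
    have := Int.le_ceil (t/l); push_cast [hn]; linarith
  have hnub : (n:ℝ) ≤ t/l + N + 2 := by
    have := Int.ceil_lt_add_one (t/l); push_cast [hn]; linarith
  refine ⟨τ, ?_, ?_, ?_⟩
  · -- τ is a common ε-almost period
    intro s
    have hkeyf : ∀ s' : ℝ, dist (f s') (f (s' + τ)) ≤ ε/2 := by
      intro s'
      have e : dist (f s') (f (s' + τ)) =
          dist (f ((s' - τ₁ m) + τ₁ m)) (f ((s' - τ₁ m) + τ₁ n)) := by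
        rw [show (s' - τ₁ m) + τ₁ m = s' by ring,
            show (s' - τ₁ m) + τ₁ n = s' + τ by rw [hτ]; ring]
      rw [e]
      calc dist (f ((s' - τ₁ m) + τ₁ m)) (f ((s' - τ₁ m) + τ₁ n))
          ≤ dist (f ((s' - τ₁ m) + τ₁ m)) (f (s' - τ₁ m))
            + dist (f (s' - τ₁ m)) (f ((s' - τ₁ m) + τ₁ n)) := dist_triangle _ _ _
        _ ≤ ε/4 + ε/4 := add_le_add (by rw [dist_comm]; exact hτ₁ m _) (hτ₁ n _)
        _ = ε/2 := by ring
    have hkeyg' : ∀ s' : ℝ, dist (g s') (g (s' + (τ₂ n - τ₂ m))) ≤ ε/2 := by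
      intro s'
      have e : dist (g s') (g (s' + (τ₂ n - τ₂ m))) =
          dist (g ((s' - τ₂ m) + τ₂ m)) (g ((s' - τ₂ m) + τ₂ n)) := by
        rw [show (s' - τ₂ m) + τ₂ m = s' by ring,
            show (s' - τ₂ m) + τ₂ n = s' + (τ₂ n - τ₂ m) by ring]
      rw [e]
      calc dist (g ((s' - τ₂ m) + τ₂ m)) (g ((s' - τ₂ m) + τ₂ n))
          ≤ dist (g ((s' - τ₂ m) + τ₂ m)) (g (s' - τ₂ m))
            + dist (g (s' - τ₂ m)) (g ((s' - τ₂ m) + τ₂ n)) := dist_triangle _ _ _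
        _ ≤ ε/4 + ε/4 := add_le_add (by rw [dist_comm]; exact hτ₂ m _) (hτ₂ n _)
        _ = ε/2 := by ring
    have hdd : |d n - d m| ≤ δ := hclass n m (hrclass n).symm
    have hclose : dist (g (s + (τ₂ n - τ₂ m))) (g (s + τ)) ≤ ε/4 := by
      apply hgδ
      have : s + (τ₂ n - τ₂ m) - (s + τ) = -(d n - d m) := by
        simp only [hτ, hd]; ring
      rw [this, abs_neg]; exact hdd
    constructor
    · linarith [hkeyf s]
    · calc dist (g s) (g (s + τ))
          ≤ dist (g s) (g (s + (τ₂ n - τ₂ m))) + dist (g (s + (τ₂ n - τ₂ m))) (g (s + τ)) :=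
            dist_triangle _ _ _
        _ ≤ ε/2 + ε/4 := add_le_add (hkeyg' s) hclose
        _ ≤ ε := by linarith
  · -- t ≤ τ
    have h1 := (hτ₁mem n).1
    have h2 := (hτ₁mem m).2
    have : (m:ℝ)*l + l ≤ (N:ℝ)*l + l := by nlinarith [hmN'.2]
    have hnl : (t/l + N + 1)*l ≤ (n:ℝ)*l := by nlinarith
    have htl : (t/l)*l = t := div_mul_cancel₀ t hl.ne'
    rw [hτ]; nlinarith
  · -- τ ≤ t + L
    have h1 := (hτ₁mem n).2
    have h2 := (hτ₁mem m).1
    have : -((N:ℝ)*l) ≤ (m:ℝ)*l := by nlinarith [hmN'.1]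
    have hnl : (n:ℝ)*l ≤ (t/l + N + 2)*l := by nlinarith
    have htl : (t/l)*l = t := div_mul_cancel₀ t hl.ne'
    rw [hτ]; nlinarith

/-- The product of two Bohr almost periodic functions is Bohr almost periodic. -/
lemma IsBohrAlmostPeriodic.prod {E F : Type*} [MetricSpace E] [MetricSpace F]
    {f : ℝ → E} {g : ℝ → F}
    (hf : IsBohrAlmostPeriodic f) (hg : IsBohrAlmostPeriodic g) :
    IsBohrAlmostPeriodic (fun t => (f t, g t)) := by
  refine ⟨hf.1.prodMk hg.1, fun ε hε => ?_⟩
  refine (common_almost_periods hf hg hε).mono ?_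
  intro τ hτ t
  have h := hτ t
  rw [Prod.dist_eq]
  exact max_le h.1 h.2

/-- Almost periodicity in product spaces: `x`, `y`, `z` are each Bohr almost
periodic iff `t ↦ (x t, y t, z t)` is Bohr almost periodic for the product
(sup) metric. -/
theorem isBohrAlmostPeriodic_prod_iff {E F G : Type*}
    [MetricSpace E] [MetricSpace F] [MetricSpace G]
    (x : ℝ → E) (y : ℝ → F) (z : ℝ → G)
    (hx : Continuous x) (hy : Continuous y) (hz : Continuous z) :
    (IsBohrAlmostPeriodic x ∧ IsBohrAlmostPeriodic y ∧ IsBohrAlmostPeriodic z) ↔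
      IsBohrAlmostPeriodic (fun t => (x t, y t, z t)) := by
  constructor
  · rintro ⟨hxap, hyap, hzap⟩
    exact hxap.prod (hyap.prod hzap)
  · intro h
    have key : ∀ ε > 0, ∀ τ : ℝ, (∀ t : ℝ, dist ((x t, y t, z t) : E × F × G)
        ((x (t+τ), y (t+τ), z (t+τ))) ≤ ε) →
        ∀ t : ℝ, dist (x t) (x (t+τ)) ≤ ε ∧ dist (y t) (y (t+τ)) ≤ ε ∧
          dist (z t) (z (t+τ)) ≤ ε := by
      intro ε hε τ hτ t
      have h1 := hτ t
      rw [Prod.dist_eq] at h1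
      have h2 := le_trans (le_max_right _ _) h1
      rw [Prod.dist_eq] at h2
      exact ⟨le_trans (le_max_left _ _) h1,
        le_trans (le_max_left _ _) h2, le_trans (le_max_right _ _) h2⟩
    refine ⟨⟨hx, fun ε hε => (h.2 ε hε).mono fun τ hτ t => (key ε hε τ hτ t).1⟩,
      ⟨hy, fun ε hε => (h.2 ε hε).mono fun τ hτ t => (key ε hε τ hτ t).2.1⟩,
      ⟨hz, fun ε hε => (h.2 ε hε).mono fun τ hτ t => (key ε hε τ hτ t).2.2⟩⟩
end

section
/- Let E be a metric space. A continuous function x : ℝ → E is Bohr almost periodic if and only if the family of translates {x(t + ·) : t ∈ ℝ} is totally bounded in the space of continuous functions ℝ → E with the uniform (sup) metric. -/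
open UniformConvergence

lemma IsBohrAlmostPeriodic.uniformContinuous {E : Type*} [MetricSpace E] {x : ℝ → E}
    (h : IsBohrAlmostPeriodic x) : UniformContinuous x := by
  obtain ⟨hc, hap⟩ := h
  rw [Metric.uniformContinuous_iff]
  intro ε hε
  obtain ⟨l, hl, hT⟩ := hap (ε / 4) (by positivity)
  have huc : UniformContinuousOn x (Set.Icc (-1 : ℝ) (l + 1)) :=
    isCompact_Icc.uniformContinuousOn_of_continuous hc.continuousOn
  rw [Metric.uniformContinuousOn_iff] at huc
  obtain ⟨δ₀, hδ₀, hδ⟩ := huc (ε / 2) (by positivity)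
  refine ⟨min δ₀ 1, by positivity, ?_⟩
  intro a b hab
  obtain ⟨τ, hτap, hτmem⟩ := hT (-a)
  obtain ⟨hτ1, hτ2⟩ := hτmem
  have hab1 : |a - b| < 1 := by
    have := lt_of_lt_of_le hab (min_le_right _ _)
    rwa [Real.dist_eq] at this
  obtain ⟨hab1a, hab1b⟩ := abs_lt.1 hab1
  have h1 : a + τ ∈ Set.Icc (-1 : ℝ) (l + 1) := ⟨by linarith, by linarith⟩
  have h2 : b + τ ∈ Set.Icc (-1 : ℝ) (l + 1) := ⟨by linarith, by linarith⟩
  have hd1 : dist (x a) (x (a + τ)) ≤ ε / 4 := hτap a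
  have hd3 : dist (x b) (x (b + τ)) ≤ ε / 4 := hτap b
  have hd2 : dist (x (a + τ)) (x (b + τ)) < ε / 2 := by
    apply hδ _ h1 _ h2
    have : dist (a + τ) (b + τ) = dist a b := by
      rw [Real.dist_eq, Real.dist_eq]; ring_nf
    rw [this]
    exact lt_of_lt_of_le hab (min_le_left _ _)
  calc dist (x a) (x b)
      ≤ dist (x a) (x (a + τ)) + dist (x (a + τ)) (x (b + τ)) + dist (x (b + τ)) (x b) :=
        dist_triangle4 _ _ _ _
    _ < ε := by rw [dist_comm (x (b + τ))] at *; linarith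

/-- Bochner's criterion: a continuous `x : ℝ → E` is Bohr almost periodic iff
the family of its translates is totally bounded for the uniformity of uniform
convergence (equivalently, for the truncated sup metric). -/
theorem isBohrAlmostPeriodic_iff_totallyBounded_translates
    {E : Type*} [MetricSpace E] (x : ℝ → E) (hx : Continuous x) :
    IsBohrAlmostPeriodic x ↔
      TotallyBounded {f : ℝ →ᵤ E | ∃ t : ℝ, f = UniformFun.ofFun fun s => x (t + s)} := by
  constructor
  · -- forward: almost periodic ⇒ totally bounded
    intro h
    rw [(UniformFun.hasBasis_uniformity_of_basis ℝ E Metric.uniformity_basis_dist_le).totallyBounded_iff]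
    intro ε hε
    obtain ⟨l, hl, hT⟩ := h.2 (ε / 2) (by positivity)
    have huc := h.uniformContinuous
    rw [Metric.uniformContinuous_iff] at huc
    obtain ⟨δ, hδpos, hδ⟩ := huc (ε / 2) (by positivity)
    set N : ℕ := ⌊l / δ⌋₊ with hN
    refine ⟨(fun i : ℕ => UniformFun.ofFun fun s => x (i * δ + s)) '' Set.Iic N,
      (Set.finite_Iic N).image _, ?_⟩
    rintro f ⟨t, rfl⟩
    obtain ⟨τ, hτap, hτ1, hτ2⟩ := hT (-t)
    set u : ℝ := t + τ with hu
    have hu0 : 0 ≤ u := by simp only [hu]; linarith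
    have hul : u ≤ l := by simp only [hu]; linarith
    set i : ℕ := ⌊u / δ⌋₊ with hi
    have hiN : i ≤ N := Nat.floor_le_floor (by gcongr)
    have hile : (i : ℝ) * δ ≤ u := by
      rw [← le_div_iff₀ hδpos]
      exact Nat.floor_le (by positivity)
    have hilt : u < (i + 1 : ℝ) * δ := by
      rw [← div_lt_iff₀ hδpos]
      exact_mod_cast Nat.lt_succ_floor _
    refine Set.mem_iUnion₂.2 ⟨_, ⟨i, hiN, rfl⟩, ?_⟩
    intro s
    simp only [Function.comp_apply, UniformFun.toFun_ofFun]
    have h1 : dist (x (t + s)) (x (u + s)) ≤ ε / 2 := by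
      have := hτap (t + s)
      have heq : t + s + τ = u + s := by rw [hu]; ring
      rwa [heq] at this
    have h2 : dist (x (u + s)) (x ((i : ℝ) * δ + s)) < ε / 2 := by
      apply hδ
      rw [Real.dist_eq]
      rw [abs_of_nonneg (by linarith)]
      push_cast at hilt ⊢
      linarith
    calc dist (x (t + s)) (x ((i : ℝ) * δ + s))
        ≤ dist (x (t + s)) (x (u + s)) + dist (x (u + s)) (x ((i : ℝ) * δ + s)) :=
          dist_triangle _ _ _
      _ ≤ ε := by linarith
  · -- backward: totally bounded ⇒ almost periodic
    intro htb
    refine ⟨hx, fun ε hε => ?_⟩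
    have hd : UniformFun.gen ℝ E {p : E × E | dist p.1 p.2 ≤ ε} ∈ uniformity (ℝ →ᵤ E) :=
      (UniformFun.hasBasis_uniformity_of_basis ℝ E Metric.uniformity_basis_dist_le).mem_of_mem hε
    obtain ⟨c, hcS, hcfin, hccov⟩ := totallyBounded_iff_subset.1 htb _ hd
    have hch : ∀ y ∈ c, ∃ ty : ℝ, y = UniformFun.ofFun fun s => x (ty + s) := fun y hy => hcS hy
    choose! tt htt using hch
    obtain ⟨M0, hM0⟩ := (hcfin.image (fun y => |tt y|)).bddAbove
    set M : ℝ := max M0 0 with hM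
    have hMbd : ∀ y ∈ c, |tt y| ≤ M := fun y hy =>
      le_trans (hM0 (Set.mem_image_of_mem _ hy)) (le_max_left _ _)
    refine ⟨2 * M + 2, by positivity, fun a => ?_⟩
    set t : ℝ := a + M + 1 with htdef
    have hfS : (UniformFun.ofFun fun s => x (t + s)) ∈
        {f : ℝ →ᵤ E | ∃ t : ℝ, f = UniformFun.ofFun fun s => x (t + s)} := ⟨t, rfl⟩
    obtain ⟨y, hy, hfy⟩ := Set.mem_iUnion₂.1 (hccov hfS)
    obtain ⟨T, hyfun, habs⟩ : ∃ T : ℝ, y = (UniformFun.ofFun fun s => x (T + s)) ∧ |T| ≤ M :=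
      ⟨tt y, htt y hy, hMbd y hy⟩
    obtain ⟨habs1, habs2⟩ := abs_le.1 habs
    refine ⟨t - T, ?_, by constructor <;> (simp only [htdef]; linarith)⟩
    intro r
    have := hfy (r - T)
    rw [hyfun] at this
    simp only [UniformFun.toFun_ofFun] at this
    have he1 : t + (r - T) = r + (t - T) := by ring
    have he2 : T + (r - T) = r := by ring
    rw [he1, he2] at this
    simpa [Set.mem_setOf_eq, dist_comm] using this
end

section
/- Let E be a complete metric space and x : ℝ → E continuous. Then x is Bohr almost periodic if and only if for every pair of real sequences (α'_n), (β'_n) there exist subsequences (α_n), (β_n) with common indices such that for every t ∈ ℝ the iterated limit lim_m lim_n x(t + α_n + β_m) and the diagonal limit lim_n x(t + α_n + β_n) both exist and are equal. -/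
open Filter Topology

section Aux

variable {E : Type*} [MetricSpace E]

/-- A Bohr almost periodic function is uniformly continuous. -/
lemma bap_unifCont {x : ℝ → E} (h : IsBohrAlmostPeriodic x) :
    ∀ ε > 0, ∃ δ > 0, ∀ s t : ℝ, |s - t| < δ → dist (x s) (x t) ≤ ε := by
  intro ε hε
  obtain ⟨l, hl, hE⟩ := h.2 (ε / 3) (by positivity)
  have hc : UniformContinuousOn x (Set.Icc (-1) (l + 1)) :=
    isCompact_Icc.uniformContinuousOn_of_continuous h.1.continuousOn
  rw [Metric.uniformContinuousOn_iff] at hc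
  obtain ⟨δ, hδ, hδ'⟩ := hc (ε / 3) (by positivity)
  refine ⟨min δ 1, by positivity, fun s t hst => ?_⟩
  obtain ⟨τ, hτ, hτ1, hτ2⟩ := hE (-t)
  have hst1 : |s - t| < 1 := lt_of_lt_of_le hst (min_le_right _ _)
  have hstδ : |s - t| < δ := lt_of_lt_of_le hst (min_le_left _ _)
  obtain ⟨hst1a, hst1b⟩ := abs_lt.mp hst1
  have hmem1 : s + τ ∈ Set.Icc (-1 : ℝ) (l + 1) := ⟨by linarith, by linarith⟩
  have hmem2 : t + τ ∈ Set.Icc (-1 : ℝ) (l + 1) := ⟨by linarith, by linarith⟩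
  have h1 : dist (x s) (x (s + τ)) ≤ ε / 3 := hτ s
  have h2 : dist (x (s + τ)) (x (t + τ)) ≤ ε / 3 := by
    refine le_of_lt (hδ' _ hmem1 _ hmem2 ?_)
    rw [Real.dist_eq]
    simpa using hstδ
  have h3 : dist (x (t + τ)) (x t) ≤ ε / 3 := by rw [dist_comm]; exact hτ t
  calc dist (x s) (x t) ≤ dist (x s) (x (s + τ)) + dist (x (s + τ)) (x (t + τ))
        + dist (x (t + τ)) (x t) := dist_triangle4 _ _ _ _
    _ ≤ ε / 3 + ε / 3 + ε / 3 := by linarith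
    _ = ε := by ring

/-- A Bohr almost periodic function is bounded. -/
lemma bap_bounded {x : ℝ → E} (h : IsBohrAlmostPeriodic x) :
    ∃ C, ∀ s t : ℝ, dist (x s) (x t) ≤ C := by
  obtain ⟨l, hl, hE⟩ := h.2 1 one_pos
  obtain ⟨C, hC⟩ := Metric.isBounded_iff.mp
    ((isCompact_Icc (a := (0:ℝ)) (b := l)).image_of_continuousOn h.1.continuousOn).isBounded
  have key : ∀ u : ℝ, ∃ r ∈ Set.Icc (0 : ℝ) l, dist (x u) (x r) ≤ 1 := by
    intro u
    obtain ⟨τ, hτ, hτ1, hτ2⟩ := hE (u - l)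
    refine ⟨u - τ, ⟨by linarith, by linarith⟩, ?_⟩
    have h1 := hτ (u - τ)
    rw [dist_comm]
    simpa using h1
  refine ⟨1 + C + 1, fun s t => ?_⟩
  obtain ⟨r, hr, h1⟩ := key s
  obtain ⟨r', hr', h2⟩ := key t
  have h3 : dist (x r) (x r') ≤ C :=
    hC (Set.mem_image_of_mem _ hr) (Set.mem_image_of_mem _ hr')
  calc dist (x s) (x t) ≤ dist (x s) (x r) + dist (x r) (x r') + dist (x r') (x t) :=
        dist_triangle4 _ _ _ _
    _ ≤ 1 + C + 1 := by rw [dist_comm (x r') (x t)] at *; linarith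

/-- From a Bohr a.p. function, every sequence of translates has a uniformly
convergent subsequence. -/
lemma bap_exists_uniform_subseq [CompleteSpace E] {x : ℝ → E}
    (h : IsBohrAlmostPeriodic x) (c : ℕ → ℝ) :
    ∃ φ : ℕ → ℕ, StrictMono φ ∧ ∃ g : ℝ → E,
      TendstoUniformly (fun n t => x (t + c (φ n))) g atTop := by
  obtain ⟨C, hC⟩ := bap_bounded h
  have hcont : ∀ r : ℝ, Continuous fun t => x (t + r) := fun r =>
    h.1.comp (continuous_id.add continuous_const)
  set G : ℝ → BoundedContinuousFunction ℝ E := fun r =>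
    BoundedContinuousFunction.mkOfBound ⟨fun t => x (t + r), hcont r⟩ C (fun a b => hC _ _)
    with hG
  have hGapp : ∀ r t, G r t = x (t + r) := fun r t => rfl
  have hGcont : Continuous G := by
    rw [Metric.continuous_iff]
    intro r ε' hε'
    obtain ⟨δ, hδ, hδ'⟩ := bap_unifCont h (ε' / 2) (by positivity)
    refine ⟨δ, hδ, fun r' hr' => ?_⟩
    have hle : dist (G r') (G r) ≤ ε' / 2 := by
      rw [BoundedContinuousFunction.dist_le (by positivity)]
      intro t
      refine hδ' _ _ ?_
      rw [Real.dist_eq] at hr'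
      simpa using hr'
    linarith
  have htb : TotallyBounded (Set.range fun n => G (c n)) := by
    rw [Metric.totallyBounded_iff]
    intro ε hε
    obtain ⟨l, hl, hE⟩ := h.2 (ε / 3) (by positivity)
    have hK : IsCompact (G '' Set.Icc 0 l) := (isCompact_Icc.image hGcont)
    obtain ⟨s, hsfin, hscov⟩ := Metric.totallyBounded_iff.mp hK.totallyBounded (ε / 2)
      (by positivity)
    refine ⟨s, hsfin, ?_⟩
    rintro _ ⟨n, rfl⟩
    obtain ⟨τ, hτ, hτ1, hτ2⟩ := hE (c n - l)
    have hmem : c n - τ ∈ Set.Icc (0 : ℝ) l := ⟨by linarith, by linarith⟩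
    have hd : dist (G (c n)) (G (c n - τ)) ≤ ε / 3 := by
      rw [BoundedContinuousFunction.dist_le (by positivity)]
      intro t
      have h1 := hτ (t + (c n - τ))
      rw [hGapp, hGapp, dist_comm]
      have e1 : t + (c n - τ) + τ = t + c n := by ring
      rw [e1] at h1
      exact h1
    have hmem2 : G (c n - τ) ∈ G '' Set.Icc 0 l := Set.mem_image_of_mem _ hmem
    obtain ⟨y, hy, hy2⟩ := Set.mem_iUnion₂.mp (hscov hmem2)
    rw [Metric.mem_ball] at hy2
    refine Set.mem_iUnion₂.mpr ⟨y, hy, ?_⟩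
    rw [Metric.mem_ball]
    calc dist (G (c n)) y ≤ dist (G (c n)) (G (c n - τ)) + dist (G (c n - τ)) y :=
          dist_triangle _ _ _
      _ < ε / 3 + ε / 2 := by linarith
      _ ≤ ε := by linarith
  have hcl : IsCompact (closure (Set.range fun n => G (c n))) :=
    TotallyBounded.isCompact_of_isClosed htb.closure isClosed_closure
  obtain ⟨F, _, φ, hφ, hconv⟩ := hcl.tendsto_subseq
    (x := fun n => G (c n)) (fun n => subset_closure ⟨n, rfl⟩)
  refine ⟨φ, hφ, fun t => F t, ?_⟩
  rw [Metric.tendstoUniformly_iff]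
  intro ε hε
  have hev : ∀ᶠ n in atTop, dist (G (c (φ n))) F < ε :=
    (Metric.tendsto_nhds.mp hconv) ε hε
  filter_upwards [hev] with n hn t
  calc dist (F t) (x (t + c (φ n))) = dist (G (c (φ n)) t) (F t) := by
        rw [hGapp, dist_comm]
    _ ≤ dist (G (c (φ n))) F := BoundedContinuousFunction.dist_coe_le_dist t
    _ < ε := hn

/-- The double-sequence property forces (sub)sequences of translates to
converge uniformly, not merely pointwise. -/
lemma P_exists_uniform_subseq {x : ℝ → E}
    (hP : ∀ α' β' : ℕ → ℝ, ∃ φ : ℕ → ℕ, StrictMono φ ∧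
        ∀ t : ℝ, ∃ L : E,
          (∃ z : ℕ → E,
            (∀ m : ℕ, Tendsto (fun n => x (t + α' (φ n) + β' (φ m))) atTop (𝓝 (z m))) ∧
            Tendsto z atTop (𝓝 L)) ∧
          Tendsto (fun n => x (t + α' (φ n) + β' (φ n))) atTop (𝓝 L))
    (c : ℕ → ℝ) :
    ∃ φ : ℕ → ℕ, StrictMono φ ∧ ∃ g : ℝ → E,
      TendstoUniformly (fun n t => x (t + c (φ n))) g atTop := by
  obtain ⟨φ, hφ, H⟩ := hP c (fun _ => 0)
  choose L hL using H
  have hpt : ∀ t, Tendsto (fun n => x (t + c (φ n))) atTop (𝓝 (L t)) := by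
    intro t
    have h1 := (hL t).2
    simpa using h1
  refine ⟨φ, hφ, L, ?_⟩
  by_contra hu
  rw [Metric.tendstoUniformly_iff] at hu
  push_neg at hu
  obtain ⟨ε, hε, hfreq⟩ := hu
  have hfreq' : ∃ᶠ n in atTop, ∃ t, ε ≤ dist (L t) (x (t + c (φ n))) := by
    refine hfreq.mono fun n hn => ?_
    exact hn
  obtain ⟨ψ, hψ, hsep⟩ := Filter.extraction_of_frequently_atTop hfreq'
  choose tk htk using hsep
  obtain ⟨θ, hθ, H2⟩ := hP (fun k => c (φ (ψ k))) tk
  obtain ⟨L0, ⟨z, hz, hzL⟩, hdiag⟩ := H2 0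
  have hz' : ∀ m, z m = L (tk (θ m)) := by
    intro m
    refine tendsto_nhds_unique (hz m) ?_
    have h1 : Tendsto (fun n => x (tk (θ m) + c (φ (ψ (θ n))))) atTop (𝓝 (L (tk (θ m)))) :=
      (hpt _).comp ((hψ.comp hθ).tendsto_atTop)
    have he : (fun n => x (0 + c (φ (ψ (θ n))) + tk (θ m)))
        = fun n => x (tk (θ m) + c (φ (ψ (θ n)))) := by
      funext n; congr 1; ring
    rw [he]
    exact h1
  have h1 : Tendsto (fun m => L (tk (θ m))) atTop (𝓝 L0) := by
    have h2 := hzL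
    rw [show z = fun m => L (tk (θ m)) from funext hz'] at h2
    exact h2
  have h2 : Tendsto (fun n => x (tk (θ n) + c (φ (ψ (θ n))))) atTop (𝓝 L0) := by
    have he : (fun n => x (0 + c (φ (ψ (θ n))) + tk (θ n)))
        = fun n => x (tk (θ n) + c (φ (ψ (θ n))))  := by
      funext n; congr 1; ring
    rw [he] at hdiag
    exact hdiag
  have h3 : Tendsto (fun n => dist (L (tk (θ n))) (x (tk (θ n) + c (φ (ψ (θ n))))))
      atTop (𝓝 0) := by
    have h4 := h1.dist h2
    simpa using h4
  have h4 : ε ≤ 0 := ge_of_tendsto' h3 fun n => htk (θ n)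
  linarith

/-- If the set of `ε`-almost periods is not relatively dense, one can build a
sequence whose translates are pairwise uniformly `ε`-separated. -/
lemma exists_separated {x : ℝ → E} {ε : ℝ}
    (hnd : ¬ RelativelyDense {τ : ℝ | ∀ t : ℝ, dist (x t) (x (t + τ)) ≤ ε}) :
    ∃ d : ℕ → ℝ, ∀ m n : ℕ, m < n → ∃ t, ε < dist (x (t + d n)) (x (t + d m)) := by
  rw [RelativelyDense] at hnd
  push_neg at hnd
  have key : ∀ l : ℝ, ∃ t : ℝ, 0 < l →
      ∀ a ∈ Set.Icc t (t + l), ∃ s, ε < dist (x s) (x (s + a)) := by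
    intro l
    by_cases hl : 0 < l
    · obtain ⟨t, ht⟩ := hnd l hl
      refine ⟨t, fun _ a ha => ?_⟩
      have h1 : a ∉ {τ : ℝ | ∀ s : ℝ, dist (x s) (x (s + τ)) ≤ ε} := by
        intro h2
        exact ht a h2 ha
      simp only [Set.mem_setOf_eq] at h1
      push_neg at h1
      exact h1
    · exact ⟨0, fun h' => absurd h' hl⟩
  choose T hT using key
  set F : ℝ × ℝ → ℝ × ℝ := fun q =>
    (T (2 * q.2 + 2) + (2 * q.2 + 2) / 2, max q.2 |T (2 * q.2 + 2) + (2 * q.2 + 2) / 2|)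
    with hF
  set p : ℕ → ℝ × ℝ := fun n => F^[n] (0, 0) with hp
  set d : ℕ → ℝ := fun n => (p n).1 with hd
  set M : ℕ → ℝ := fun n => (p n).2 with hM
  have hpsucc : ∀ n, p (n + 1) = F (p n) := by
    intro n
    simp only [hp, Function.iterate_succ_apply']
  have hdsucc : ∀ n, d (n + 1) = T (2 * M n + 2) + (2 * M n + 2) / 2 := by
    intro n
    simp only [hd, hM, hpsucc n, hF]
  have hMsucc : ∀ n, M (n + 1) = max (M n) |d (n + 1)| := by
    intro n
    simp only [hM, hd, hpsucc n, hF]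
  have hM0 : ∀ n, 0 ≤ M n := by
    intro n
    induction n with
    | zero => simp [hM, hp]
    | succ k ih => rw [hMsucc]; exact le_trans ih (le_max_left _ _)
  have hle : ∀ n i, i ≤ n → |d i| ≤ M n := by
    intro n
    induction n with
    | zero =>
      intro i hi
      interval_cases i
      simp [hd, hM, hp]
    | succ k ih =>
      intro i hi
      rcases Nat.lt_succ_iff_lt_or_eq.mp (Nat.lt_succ_of_le hi) with h | h
      · exact le_trans (ih i (Nat.lt_succ_iff.mp h))
          (by rw [hMsucc]; exact le_max_left _ _)
      · subst h
        rw [hMsucc]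
        exact le_max_right _ _
  have hstep : ∀ n, ∀ i ≤ n, ∃ s, ε < dist (x s) (x (s + (d (n + 1) - d i))) := by
    intro n i hi
    set l : ℝ := 2 * M n + 2 with hl
    have hlpos : 0 < l := by have := hM0 n; positivity
    have hdi : |d i| ≤ M n := hle n i hi
    obtain ⟨hdi1, hdi2⟩ := abs_le.mp hdi
    have hmem : d (n + 1) - d i ∈ Set.Icc (T l) (T l + l) := by
      rw [hdsucc n]
      constructor
      · simp only [hl] at *; linarith
      · simp only [hl] at *; linarith
    exact hT l hlpos _ hmem
  refine ⟨d, fun m n hmn => ?_⟩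
  obtain ⟨k, rfl⟩ : ∃ k, n = k + 1 := ⟨n - 1, by omega⟩
  obtain ⟨s, hs⟩ := hstep k m (by omega)
  refine ⟨s - d m, ?_⟩
  have e1 : s - d m + d (k + 1) = s + (d (k + 1) - d m) := by ring
  have e2 : s - d m + d m = s := by ring
  rw [e1, e2, dist_comm]
  exact hs

end Aux

/-- Bochner's double sequence criterion: for complete `E`, a continuous
`x : ℝ → E` is Bohr almost periodic iff for every pair of real sequences
there are subsequences (with common indices) along which the iterated limit
and the diagonal limit exist and agree, for every `t`. -/
theorem isBohrAlmostPeriodic_iff_double_sequence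
    {E : Type*} [MetricSpace E] [CompleteSpace E] (x : ℝ → E) (hx : Continuous x) :
    IsBohrAlmostPeriodic x ↔
      ∀ α' β' : ℕ → ℝ, ∃ φ : ℕ → ℕ, StrictMono φ ∧
        ∀ t : ℝ, ∃ L : E,
          (∃ z : ℕ → E,
            (∀ m : ℕ, Tendsto (fun n => x (t + α' (φ n) + β' (φ m))) atTop (𝓝 (z m))) ∧
            Tendsto z atTop (𝓝 L)) ∧
          Tendsto (fun n => x (t + α' (φ n) + β' (φ n))) atTop (𝓝 L) := by
  constructor
  · -- Bohr almost periodic ⇒ double sequence criterion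
    intro hap α' β'
    obtain ⟨φ₁, hφ₁, gA, hA⟩ := bap_exists_uniform_subseq hap α'
    obtain ⟨φ₂, hφ₂, gB, hB⟩ := bap_exists_uniform_subseq hap (fun n => β' (φ₁ n))
    refine ⟨φ₁ ∘ φ₂, hφ₁.comp hφ₂, fun t => ?_⟩
    simp only [Function.comp_apply]
    set α : ℕ → ℝ := fun n => α' (φ₁ (φ₂ n)) with hα
    set β : ℕ → ℝ := fun n => β' (φ₁ (φ₂ n)) with hβ
    have hA2 : ∀ ε > 0, ∀ᶠ n in atTop, ∀ u : ℝ, dist (gA u) (x (u + α n)) < ε := by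
      intro ε hε
      exact hφ₂.tendsto_atTop.eventually (Metric.tendstoUniformly_iff.mp hA ε hε)
    have hB2 : ∀ ε > 0, ∀ᶠ m in atTop, ∀ u : ℝ, dist (gB u) (x (u + β m)) < ε :=
      fun ε hε => Metric.tendstoUniformly_iff.mp hB ε hε
    have hz : ∀ m, Tendsto (fun n => x (t + α n + β m)) atTop (𝓝 (gA (t + β m))) := by
      intro m
      rw [Metric.tendsto_atTop]
      intro ε hε
      obtain ⟨N, hN⟩ := eventually_atTop.mp (hA2 ε hε)
      refine ⟨N, fun n hn => ?_⟩
      have h1 := hN n hn (t + β m)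
      rw [dist_comm]
      have e : t + α n + β m = t + β m + α n := by ring
      rw [e]
      exact h1
    have hzC : CauchySeq (fun m => gA (t + β m)) := by
      rw [Metric.cauchySeq_iff]
      intro δ hδ
      obtain ⟨N, hN⟩ := eventually_atTop.mp (hB2 (δ / 4) (by positivity))
      refine ⟨N, fun m hm m' hm' => ?_⟩
      obtain ⟨N₁, h₁⟩ := Metric.tendsto_atTop.mp (hz m) (δ / 4) (by positivity)
      obtain ⟨N₂, h₂⟩ := Metric.tendsto_atTop.mp (hz m') (δ / 4) (by positivity)
      set n := max N₁ N₂ with hn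
      have d1 := h₁ n (le_max_left _ _)
      have d2 := h₂ n (le_max_right _ _)
      have d3 := hN m hm (t + α n)
      have d4 := hN m' hm' (t + α n)
      have htri1 : dist (gA (t + β m)) (gA (t + β m')) ≤
          dist (gA (t + β m)) (x (t + α n + β m)) +
          dist (x (t + α n + β m)) (x (t + α n + β m')) +
          dist (x (t + α n + β m')) (gA (t + β m')) := dist_triangle4 _ _ _ _
      have htri2 : dist (x (t + α n + β m)) (x (t + α n + β m')) ≤
          dist (x (t + α n + β m)) (gB (t + α n)) + dist (gB (t + α n)) (x (t + α n + β m')) :=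
        dist_triangle _ _ _
      rw [dist_comm] at d1 d3
      linarith
    obtain ⟨L, hL⟩ := cauchySeq_tendsto_of_complete hzC
    refine ⟨L, ⟨fun m => gA (t + β m), hz, hL⟩, ?_⟩
    rw [Metric.tendsto_atTop]
    intro δ hδ
    obtain ⟨N₁, h₁⟩ := eventually_atTop.mp (hA2 (δ / 2) (by positivity))
    obtain ⟨N₂, h₂⟩ := Metric.tendsto_atTop.mp hL (δ / 2) (by positivity)
    refine ⟨max N₁ N₂, fun n hn => ?_⟩
    have d1 := h₁ n (le_trans (le_max_left _ _) hn) (t + β n)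
    have d2 := h₂ n (le_trans (le_max_right _ _) hn)
    have htri : dist (x (t + α n + β n)) L ≤
        dist (x (t + α n + β n)) (gA (t + β n)) + dist (gA (t + β n)) L := dist_triangle _ _ _
    have e : t + β n + α n = t + α n + β n := by ring
    rw [e, dist_comm] at d1
    linarith
  · -- double sequence criterion ⇒ Bohr almost periodic
    intro hP
    refine ⟨hx, ?_⟩
    intro ε hε
    by_contra hnd
    obtain ⟨d, hsep⟩ := exists_separated hnd
    obtain ⟨φ, hφ, g, hg⟩ := P_exists_uniform_subseq hP d
    obtain ⟨N, hN⟩ := eventually_atTop.mp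
      (Metric.tendstoUniformly_iff.mp hg (ε / 2) (by positivity))
    obtain ⟨t, ht⟩ := hsep (φ N) (φ (N + 1)) (hφ (Nat.lt_succ_self N))
    have a1 := hN N le_rfl t
    have a2 := hN (N + 1) (Nat.le_succ N) t
    have htr := dist_triangle (x (t + d (φ (N + 1)))) (g t) (x (t + d (φ N)))
    rw [dist_comm] at a2
    linarith
end

section
/- Let p ≥ 1 and X : ℝ → L^p(Ω; E) (i.e., E[dist(X(t,·), x₀)^p] < ∞ for all t). Then X is θ-almost periodic in p-mean if and only if X is θ-almost periodic (in probability) and the family of random variables dist(X(t,·), x₀)^p, t ∈ ℝ, is uniformly integrable for some (equivalently any) x₀ ∈ E. -/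
open MeasureTheory Set Filter Topology

noncomputable section

variable {Ω : Type*} [MeasurableSpace Ω] {E : Type*} [MetricSpace E]

/-- The metric of convergence in probability on random variables. -/
def d0 (P : Measure Ω) (Y Z : Ω → E) : ℝ :=
  ∫ ω, min (dist (Y ω) (Z ω)) 1 ∂P

/-- `τ` is a `θ`-`ε`-almost period of the process `X`. -/
def IsThetaAlmostPeriod (P : Measure Ω) (θ : ℝ → Ω → Ω) (X : ℝ → Ω → E)
    (ε τ : ℝ) : Prop :=
  ∀ t : ℝ, d0 P (fun ω => X (t + τ) (θ (-τ) ω)) (X t) ≤ ε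

/-- `θ`-almost periodicity (in probability): joint continuity in probability of
`(t,s) ↦ X (t+s, θ₋ₛ ·)` and relative density of the set of `θ`-`ε`-almost
periods for every `ε > 0`. -/
def ThetaAlmostPeriodic (P : Measure Ω) (θ : ℝ → Ω → Ω) (X : ℝ → Ω → E) : Prop :=
  (∀ t s : ℝ, ∀ ε > 0, ∃ δ > 0, ∀ t' s' : ℝ, |t' - t| < δ → |s' - s| < δ →
      d0 P (fun ω => X (t' + s') (θ (-s') ω)) (fun ω => X (t + s) (θ (-s) ω)) ≤ ε) ∧
  (∀ ε > 0, RelativelyDense {τ : ℝ | IsThetaAlmostPeriod P θ X ε τ})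

/-- The `p`-mean distance between random variables. -/
def dp (P : Measure Ω) (p : ℝ) (Y Z : Ω → E) : ℝ :=
  (∫ ω, dist (Y ω) (Z ω) ^ p ∂P) ^ (1 / p)

/-- `θ`-almost periodicity in `p`-mean. -/
def ThetaAlmostPeriodicP (P : Measure Ω) (θ : ℝ → Ω → Ω) (p : ℝ)
    (X : ℝ → Ω → E) : Prop :=
  (∀ t s : ℝ, ∀ ε > 0, ∃ δ > 0, ∀ t' s' : ℝ, |t' - t| < δ → |s' - s| < δ →
      dp P p (fun ω => X (t' + s') (θ (-s') ω)) (fun ω => X (t + s) (θ (-s) ω)) ≤ ε) ∧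
  (∀ ε > 0, RelativelyDense {τ : ℝ |
      ∀ t : ℝ, dp P p (fun ω => X (t + τ) (θ (-τ) ω)) (X t) ≤ ε})

section APAux

lemma apAux_rpow_add_le {p a b : ℝ} (hp : 0 ≤ p) (ha : 0 ≤ a) (hb : 0 ≤ b) :
    (a + b) ^ p ≤ 2 ^ p * (a ^ p + b ^ p) := by
  have h1 : a + b ≤ 2 * max a b := by
    rcases max_cases a b with ⟨h, _⟩ | ⟨h, _⟩ <;> rw [h] <;>
      linarith [le_max_left a b, le_max_right a b]
  calc (a + b) ^ p ≤ (2 * max a b) ^ p :=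
        Real.rpow_le_rpow (by positivity) h1 hp
    _ = 2 ^ p * (max a b) ^ p := Real.mul_rpow (by norm_num) (le_max_of_le_left ha)
    _ ≤ 2 ^ p * (a ^ p + b ^ p) := by
        apply mul_le_mul_of_nonneg_left _ (by positivity)
        rcases max_cases a b with ⟨h, _⟩ | ⟨h, _⟩ <;> rw [h]
        · nlinarith [Real.rpow_nonneg hb p]
        · nlinarith [Real.rpow_nonneg ha p]

set_option linter.unusedVariables false in
lemma apAux_tail_ptwise {p a b c B C₀ : ℝ} (hp : 1 ≤ p) (ha : 0 ≤ a) (hb : 0 ≤ b) (hc : 0 ≤ c)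
    (hT : a ≤ b + c) (hC₀ : 0 ≤ C₀) (hCB : C₀ ≤ B) :
    (if 2*B ≤ a then a ^ p else 0)
      ≤ 2 ^ p * b ^ p + 2 ^ p * (if C₀ ≤ c then c ^ p else 0) := by
  have hp0 : (0:ℝ) ≤ p := by linarith
  by_cases hA : 2*B ≤ a
  · rw [if_pos hA]
    rcases le_or_gt c b with hcb | hbc
    · have h1 : a ^ p ≤ (2*b) ^ p := Real.rpow_le_rpow ha (by linarith) hp0
      rw [Real.mul_rpow (by norm_num) hb] at h1
      have h2 : (0:ℝ) ≤ 2 ^ p * (if C₀ ≤ c then c ^ p else 0) := by positivity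
      linarith
    · have hcc : C₀ ≤ c := by linarith
      rw [if_pos hcc]
      have h1 : a ^ p ≤ (2*c) ^ p := Real.rpow_le_rpow ha (by linarith) hp0
      rw [Real.mul_rpow (by norm_num) hc] at h1
      have h2 : (0:ℝ) ≤ 2 ^ p * b ^ p := by positivity
      linarith
  · rw [if_neg hA]
    positivity

lemma apAux_vitali_ptwise {p a c D C δ : ℝ} (hp : 1 ≤ p) (ha : 0 ≤ a) (hc : 0 ≤ c) (hD : 0 ≤ D)
    (hT : D ≤ a + c) (hC : 1 ≤ C) (hδ : 0 < δ) :
    D ^ p ≤ δ ^ p + 2 ^ p * ((if C ≤ a then a ^ p else 0) + (if C ≤ c then c ^ p else 0)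
      + 2 * C ^ p * (min D 1 / min δ 1)) := by
  have hp0 : (0:ℝ) ≤ p := by linarith
  have hmδ : 0 < min δ 1 := lt_min hδ one_pos
  rcases lt_or_ge D δ with hlt | hge
  · have h1 : D ^ p ≤ δ ^ p := Real.rpow_le_rpow hD hlt.le hp0
    have h2 : (0:ℝ) ≤ 2 ^ p * ((if C ≤ a then a ^ p else 0) + (if C ≤ c then c ^ p else 0)
        + 2 * C ^ p * (min D 1 / min δ 1)) := by
      have : (0:ℝ) ≤ min D 1 / min δ 1 := by positivity
      positivity
    linarith
  · have hM : 1 ≤ min D 1 / min δ 1 := by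
      rw [le_div_iff₀ hmδ, one_mul]
      exact min_le_min hge le_rfl
    set M := min D 1 / min δ 1 with hMdef
    have hCpn : (0:ℝ) ≤ C ^ p := Real.rpow_nonneg (by linarith) p
    have hstep : ∀ x : ℝ, 0 ≤ x → x ^ p ≤ (if C ≤ x then x ^ p else 0) + C ^ p * M := by
      intro x hx
      by_cases hCx : C ≤ x
      · rw [if_pos hCx]
        nlinarith [Real.rpow_nonneg hx p]
      · rw [if_neg hCx]
        have h1 : x ^ p ≤ C ^ p := Real.rpow_le_rpow hx (le_of_not_ge hCx) hp0
        nlinarith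
    have h1 : D ^ p ≤ 2 ^ p * (a ^ p + c ^ p) :=
      le_trans (Real.rpow_le_rpow hD hT hp0) (apAux_rpow_add_le hp0 ha hc)
    have h2 := hstep a ha
    have h3 := hstep c hc
    have h4 : (0:ℝ) ≤ δ ^ p := Real.rpow_nonneg hδ.le p
    have h5 : (0:ℝ) < 2 ^ p := Real.rpow_pos_of_pos two_pos p
    nlinarith

lemma apAux_reldense_mono {A B : Set ℝ} (h : A ⊆ B) (hA : RelativelyDense A) :
    RelativelyDense B := by
  obtain ⟨l, hl, hAd⟩ := hA
  exact ⟨l, hl, fun t => by obtain ⟨a, ha, hI⟩ := hAd t; exact ⟨a, h ha, hI⟩⟩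

set_option linter.unusedSectionVars false
set_option linter.unusedVariables false

variable {Ω : Type*} [MeasurableSpace Ω] {E : Type*} [MetricSpace E]
  [MeasurableSpace E] [BorelSpace E] [SecondCountableTopology E]
  {P : Measure Ω} [IsProbabilityMeasure P] {p : ℝ}

lemma apAux_intD_nonneg (Y Z : Ω → E) : 0 ≤ ∫ ω, dist (Y ω) (Z ω) ^ p ∂P :=
  integral_nonneg fun _ => Real.rpow_nonneg dist_nonneg p

lemma apAux_dp_nonneg (Y Z : Ω → E) : 0 ≤ dp P p Y Z :=
  Real.rpow_nonneg (apAux_intD_nonneg Y Z) _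

lemma apAux_dp_pow (hp : 1 ≤ p) (Y Z : Ω → E) :
    dp P p Y Z ^ p = ∫ ω, dist (Y ω) (Z ω) ^ p ∂P := by
  rw [dp, ← Real.rpow_mul (apAux_intD_nonneg Y Z), one_div_mul_cancel (by linarith : p ≠ 0),
    Real.rpow_one]

lemma apAux_int_dist_pow (hp : 1 ≤ p) (x₀ : E) {Y Z : Ω → E} (hY : Measurable Y)
    (hZ : Measurable Z)
    (hYx : Integrable (fun ω => dist (Y ω) x₀ ^ p) P)
    (hZx : Integrable (fun ω => dist (Z ω) x₀ ^ p) P) :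
    Integrable (fun ω => dist (Y ω) (Z ω) ^ p) P := by
  have hm : Measurable (fun ω => dist (Y ω) (Z ω) ^ p) :=
    (hY.dist hZ).pow measurable_const
  refine ((hYx.add hZx).const_mul (2 ^ p)).mono' hm.aestronglyMeasurable ?_
  filter_upwards with ω
  have h1 : dist (Y ω) (Z ω) ≤ dist (Y ω) x₀ + dist (Z ω) x₀ := dist_triangle_right _ _ _
  have h2 : dist (Y ω) (Z ω) ^ p ≤ (dist (Y ω) x₀ + dist (Z ω) x₀) ^ p :=
    Real.rpow_le_rpow dist_nonneg h1 (by linarith)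
  rw [Real.norm_eq_abs, abs_of_nonneg (Real.rpow_nonneg dist_nonneg p)]
  exact h2.trans (apAux_rpow_add_le (by linarith) dist_nonneg dist_nonneg)

lemma apAux_integral_comp {f : Ω → Ω} (hf : MeasurePreserving f P P) {g : Ω → ℝ}
    (hg : AEStronglyMeasurable g P) : ∫ ω, g (f ω) ∂P = ∫ ω, g ω ∂P := by
  conv_rhs => rw [← hf.map_eq]
  exact (integral_map hf.measurable.aemeasurable (by rwa [hf.map_eq])).symm

lemma apAux_integrable_comp {f : Ω → Ω} (hf : MeasurePreserving f P P) {g : Ω → ℝ}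
    (hg : Integrable g P) : Integrable (fun ω => g (f ω)) P := by
  exact (integrable_map_measure (by rw [hf.map_eq]; exact hg.1)
    hf.measurable.aemeasurable).mp (by rwa [hf.map_eq])

lemma apAux_dp_eq (hp : 1 ≤ p) {Y Z : Ω → E} (hY : Measurable Y) (hZ : Measurable Z) :
    dp P p Y Z
      = ((∫⁻ ω, ENNReal.ofReal (dist (Y ω) (Z ω)) ^ p ∂P) ^ (1 / p)).toReal := by
  have h0 : (0:ℝ) ≤ p := by linarith
  rw [dp, integral_eq_lintegral_of_nonneg_ae
      (Filter.Eventually.of_forall fun ω => Real.rpow_nonneg dist_nonneg p)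
      ((hY.dist hZ).pow measurable_const).aestronglyMeasurable, ENNReal.toReal_rpow]
  congr 2
  refine lintegral_congr fun ω => ?_
  rw [ENNReal.ofReal_rpow_of_nonneg dist_nonneg h0]

lemma apAux_dp_triangle (hp : 1 ≤ p) {Y Z W : Ω → E} (hY : Measurable Y) (hZ : Measurable Z)
    (hW : Measurable W)
    (h1 : Integrable (fun ω => dist (Y ω) (Z ω) ^ p) P)
    (h2 : Integrable (fun ω => dist (Z ω) (W ω) ^ p) P) :
    dp P p Y W ≤ dp P p Y Z + dp P p Z W := by
  have h0 : (0:ℝ) ≤ p := by linarith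
  set f : Ω → ENNReal := fun ω => ENNReal.ofReal (dist (Y ω) (Z ω)) with hf
  set g : Ω → ENNReal := fun ω => ENNReal.ofReal (dist (Z ω) (W ω)) with hg
  have hfm : AEMeasurable f P := (ENNReal.measurable_ofReal.comp (hY.dist hZ)).aemeasurable
  have hgm : AEMeasurable g P := (ENNReal.measurable_ofReal.comp (hZ.dist hW)).aemeasurable
  have hfin1 : (∫⁻ ω, f ω ^ p ∂P) < ⊤ := by
    refine lt_of_le_of_lt (le_of_eq ?_) h1.lintegral_lt_top
    refine lintegral_congr fun ω => ?_
    rw [hf, ENNReal.ofReal_rpow_of_nonneg dist_nonneg h0]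
  have hfin2 : (∫⁻ ω, g ω ^ p ∂P) < ⊤ := by
    refine lt_of_le_of_lt (le_of_eq ?_) h2.lintegral_lt_top
    refine lintegral_congr fun ω => ?_
    rw [hg, ENNReal.ofReal_rpow_of_nonneg dist_nonneg h0]
  have key : (∫⁻ ω, ENNReal.ofReal (dist (Y ω) (W ω)) ^ p ∂P) ^ (1/p)
      ≤ (∫⁻ ω, f ω ^ p ∂P) ^ (1/p) + (∫⁻ ω, g ω ^ p ∂P) ^ (1/p) := by
    refine le_trans ?_ (ENNReal.lintegral_Lp_add_le hfm hgm hp)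
    refine ENNReal.rpow_le_rpow (lintegral_mono fun ω => ?_) (by positivity)
    refine ENNReal.rpow_le_rpow ?_ h0
    calc ENNReal.ofReal (dist (Y ω) (W ω))
        ≤ ENNReal.ofReal (dist (Y ω) (Z ω) + dist (Z ω) (W ω)) :=
          ENNReal.ofReal_le_ofReal (dist_triangle _ _ _)
      _ = (f + g) ω := by
          simp only [Pi.add_apply, hf, hg]
          rw [ENNReal.ofReal_add dist_nonneg dist_nonneg]
  rw [apAux_dp_eq hp hY hW, apAux_dp_eq hp hY hZ, apAux_dp_eq hp hZ hW]
  have hne1 : (∫⁻ ω, f ω ^ p ∂P) ^ (1/p) ≠ ⊤ :=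
    (ENNReal.rpow_lt_top_of_nonneg (by positivity) hfin1.ne).ne
  have hne2 : (∫⁻ ω, g ω ^ p ∂P) ^ (1/p) ≠ ⊤ :=
    (ENNReal.rpow_lt_top_of_nonneg (by positivity) hfin2.ne).ne
  have hmono := ENNReal.toReal_mono (ENNReal.add_ne_top.2 ⟨hne1, hne2⟩) key
  rw [ENNReal.toReal_add hne1 hne2] at hmono
  exact hmono

lemma apAux_integrable_min_dist {Y Z : Ω → E} (hY : Measurable Y) (hZ : Measurable Z) :
    Integrable (fun ω => min (dist (Y ω) (Z ω)) 1) P := by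
  refine (integrable_const (1:ℝ)).mono'
    ((hY.dist hZ).min measurable_const).aestronglyMeasurable ?_
  filter_upwards with ω
  rw [Real.norm_eq_abs, abs_of_nonneg (le_min dist_nonneg zero_le_one)]
  exact min_le_right _ _

lemma apAux_d0_le_of_dp (hp : 1 ≤ p) {Y Z : Ω → E} (hY : Measurable Y) (hZ : Measurable Z)
    (hI : Integrable (fun ω => dist (Y ω) (Z ω) ^ p) P)
    {ε : ℝ} (hε : 0 < ε) (h : dp P p Y Z ≤ min ε 1 / 2 * (min ε 1 / 2)) :
    d0 P Y Z ≤ ε := by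
  set δ := min ε 1 / 2 with hδdef
  have hδ : 0 < δ := by positivity
  have hδ1 : δ ≤ 1 := by
    have := min_le_right ε 1; rw [hδdef]; linarith
  have step1 : d0 P Y Z ≤ δ + δ⁻¹ ^ p * ∫ ω, dist (Y ω) (Z ω) ^ p ∂P := by
    rw [d0]
    calc ∫ ω, min (dist (Y ω) (Z ω)) 1 ∂P
        ≤ ∫ ω, (δ + δ⁻¹ ^ p * dist (Y ω) (Z ω) ^ p) ∂P := by
          refine integral_mono (apAux_integrable_min_dist hY hZ)
            ((integrable_const δ).add (hI.const_mul _)) fun ω => ?_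
          rcases lt_or_ge (dist (Y ω) (Z ω)) δ with hlt | hge
          · have : min (dist (Y ω) (Z ω)) 1 ≤ δ := (min_le_left _ _).trans hlt.le
            have hn : 0 ≤ δ⁻¹ ^ p * dist (Y ω) (Z ω) ^ p := by positivity
            linarith
          · have h1 : (1:ℝ) ≤ δ⁻¹ * dist (Y ω) (Z ω) := by
              rw [← inv_mul_cancel₀ hδ.ne']
              exact mul_le_mul_of_nonneg_left hge (by positivity)
            have h2 : (1:ℝ) ≤ δ⁻¹ ^ p * dist (Y ω) (Z ω) ^ p := by
              rw [← Real.mul_rpow (by positivity) dist_nonneg]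
              calc (1:ℝ) = 1 ^ p := (Real.one_rpow p).symm
                _ ≤ (δ⁻¹ * dist (Y ω) (Z ω)) ^ p :=
                    Real.rpow_le_rpow zero_le_one h1 (by linarith)
            have h3 : min (dist (Y ω) (Z ω)) 1 ≤ 1 := min_le_right _ _
            linarith
      _ = δ + δ⁻¹ ^ p * ∫ ω, dist (Y ω) (Z ω) ^ p ∂P := by
          rw [integral_add (integrable_const δ) (hI.const_mul _), integral_const,
            integral_const_mul]
          simp
  have hint : ∫ ω, dist (Y ω) (Z ω) ^ p ∂P ≤ (δ * δ) ^ p := by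
    rw [← apAux_dp_pow hp Y Z]
    exact Real.rpow_le_rpow (apAux_dp_nonneg Y Z) h (by linarith)
  have key : δ⁻¹ ^ p * ∫ ω, dist (Y ω) (Z ω) ^ p ∂P ≤ δ := by
    calc δ⁻¹ ^ p * ∫ ω, dist (Y ω) (Z ω) ^ p ∂P ≤ δ⁻¹ ^ p * (δ * δ) ^ p :=
          mul_le_mul_of_nonneg_left hint (by positivity)
      _ = δ ^ p := by
          rw [← Real.mul_rpow (by positivity) (by positivity)]
          congr 1; field_simp
      _ ≤ δ ^ (1:ℝ) := Real.rpow_le_rpow_of_exponent_ge hδ hδ1 hp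
      _ = δ := Real.rpow_one δ
  have : δ + δ ≤ ε := by
    have := min_le_left ε 1; rw [hδdef]; linarith
  linarith

lemma apAux_tail_mono (x₀ : E) {Y : Ω → E} (hY : Measurable Y)
    (hI : Integrable (fun ω => dist (Y ω) x₀ ^ p) P) {C C' : ℝ} (h : C ≤ C') :
    ∫ ω in {ω | C' ≤ dist (Y ω) x₀}, dist (Y ω) x₀ ^ p ∂P
      ≤ ∫ ω in {ω | C ≤ dist (Y ω) x₀}, dist (Y ω) x₀ ^ p ∂P := by
  refine setIntegral_mono_set hI.integrableOn
    (Filter.Eventually.of_forall fun ω => Real.rpow_nonneg dist_nonneg p) ?_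
  exact Filter.Eventually.of_forall fun ω hω => le_trans h hω

lemma apAux_tail_comp {f : Ω → Ω} (hf : MeasurePreserving f P P) {g : Ω → ℝ}
    (hg : Measurable g) (C : ℝ) :
    ∫ ω in {ω | C ≤ g (f ω)}, g (f ω) ^ p ∂P = ∫ ω in {ω | C ≤ g ω}, g ω ^ p ∂P := by
  have hs : MeasurableSet {ω | C ≤ g ω} := measurableSet_le measurable_const hg
  have hs' : MeasurableSet {ω | C ≤ g (f ω)} :=
    measurableSet_le measurable_const (hg.comp hf.measurable)
  rw [← integral_indicator hs, ← integral_indicator hs']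
  have heq : (fun ω => Set.indicator {ω | C ≤ g (f ω)} (fun ω => g (f ω) ^ p) ω)
      = fun ω => Set.indicator {ω | C ≤ g ω} (fun ω => g ω ^ p) (f ω) := by
    funext ω
    simp only [Set.indicator_apply, Set.mem_setOf_eq]
  rw [heq]
  exact apAux_integral_comp hf ((hg.pow measurable_const).indicator hs).aestronglyMeasurable

lemma apAux_tail_single (hp : 1 ≤ p) (x₀ : E) {Y : Ω → E} (hY : Measurable Y)
    (hI : Integrable (fun ω => dist (Y ω) x₀ ^ p) P) {η : ℝ} (hη : 0 < η) :
    ∃ C : ℝ, 1 ≤ C ∧ ∫ ω in {ω | C ≤ dist (Y ω) x₀}, dist (Y ω) x₀ ^ p ∂P ≤ η := by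
  set h : Ω → ℝ := fun ω => dist (Y ω) x₀ ^ p with hhdef
  have hm : Measurable h := (hY.dist measurable_const).pow measurable_const
  have hpos : ∀ ω, 0 ≤ h ω := fun ω => Real.rpow_nonneg dist_nonneg p
  set F : ℕ → Ω → ℝ := fun n ω => Set.indicator {ω | (n:ℝ) ≤ h ω} h ω with hFdef
  have hFs : ∀ n : ℕ, MeasurableSet {ω | (n:ℝ) ≤ h ω} :=
    fun n => measurableSet_le measurable_const hm
  have htend : Tendsto (fun n => ∫ ω, F n ω ∂P) atTop (𝓝 (∫ ω, (0:ℝ) ∂P)) := by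
    refine tendsto_integral_of_dominated_convergence h
      (fun n => (hm.indicator (hFs n)).aestronglyMeasurable) hI ?_ ?_
    · intro n
      filter_upwards with ω
      rw [Real.norm_eq_abs, abs_of_nonneg (Set.indicator_apply_nonneg (fun _ => hpos ω))]
      exact Set.indicator_le_self' (fun x _ => hpos x) ω
    · filter_upwards with ω
      obtain ⟨N, hN⟩ := exists_nat_gt (h ω)
      refine tendsto_const_nhds.congr' ?_
      filter_upwards [eventually_ge_atTop N] with n hn
      have : ¬ ((n:ℝ) ≤ h ω) := by
        push_neg
        exact lt_of_lt_of_le hN (by exact_mod_cast hn)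
      simp [hFdef, Set.indicator_apply, this]
  rw [integral_zero] at htend
  rw [Metric.tendsto_atTop] at htend
  obtain ⟨N, hN⟩ := htend η hη
  have hFN : ∫ ω, F N ω ∂P ≤ η := by
    have := hN N le_rfl
    rw [Real.dist_eq, sub_zero] at this
    exact (le_abs_self _).trans this.le
  set C : ℝ := max ((N:ℝ) ^ (1/p)) 1 with hCdef
  refine ⟨C, le_max_right _ _, ?_⟩
  have hsub : {ω | C ≤ dist (Y ω) x₀} ⊆ {ω | (N:ℝ) ≤ h ω} := by
    intro ω hω
    simp only [Set.mem_setOf_eq] at hω ⊢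
    have h1 : ((N:ℝ) ^ (1/p)) ^ p ≤ dist (Y ω) x₀ ^ p :=
      Real.rpow_le_rpow (Real.rpow_nonneg (Nat.cast_nonneg N) _)
        (le_trans (le_max_left _ _) hω) (by linarith)
    rwa [← Real.rpow_mul (Nat.cast_nonneg N), one_div_mul_cancel (by linarith : p ≠ 0),
      Real.rpow_one] at h1
  calc ∫ ω in {ω | C ≤ dist (Y ω) x₀}, dist (Y ω) x₀ ^ p ∂P
      ≤ ∫ ω in {ω | (N:ℝ) ≤ h ω}, h ω ∂P := by
        refine setIntegral_mono_set hI.integrableOn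
          (Filter.Eventually.of_forall fun ω => hpos ω) ?_
        exact Filter.Eventually.of_forall hsub
    _ = ∫ ω, F N ω ∂P := (integral_indicator (hFs N)).symm
    _ ≤ η := hFN

lemma apAux_tail_est (hp : 1 ≤ p) (x₀ : E) {Y Z : Ω → E} (hY : Measurable Y) (hZ : Measurable Z)
    (hYx : Integrable (fun ω => dist (Y ω) x₀ ^ p) P)
    (hZx : Integrable (fun ω => dist (Z ω) x₀ ^ p) P)
    (hb : Integrable (fun ω => dist (Y ω) (Z ω) ^ p) P)
    {B C₀ r η : ℝ} (hC₀ : 0 ≤ C₀) (hCB : C₀ ≤ B)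
    (hr : ∫ ω, dist (Y ω) (Z ω) ^ p ∂P ≤ r)
    (htail : ∫ ω in {ω | C₀ ≤ dist (Z ω) x₀}, dist (Z ω) x₀ ^ p ∂P ≤ η) :
    ∫ ω in {ω | 2*B ≤ dist (Y ω) x₀}, dist (Y ω) x₀ ^ p ∂P ≤ 2 ^ p * r + 2 ^ p * η := by
  have hsY : MeasurableSet {ω | 2*B ≤ dist (Y ω) x₀} :=
    measurableSet_le measurable_const (hY.dist measurable_const)
  have hsZ : MeasurableSet {ω | C₀ ≤ dist (Z ω) x₀} :=
    measurableSet_le measurable_const (hZ.dist measurable_const)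
  rw [← integral_indicator hsY]
  have key : ∫ ω, Set.indicator {ω | 2*B ≤ dist (Y ω) x₀} (fun ω => dist (Y ω) x₀ ^ p) ω ∂P
      ≤ ∫ ω, (2 ^ p * dist (Y ω) (Z ω) ^ p
        + 2 ^ p * Set.indicator {ω | C₀ ≤ dist (Z ω) x₀} (fun ω => dist (Z ω) x₀ ^ p) ω) ∂P := by
    refine integral_mono (hYx.indicator hsY)
      ((hb.const_mul _).add ((hZx.indicator hsZ).const_mul _)) fun ω => ?_
    simp only [Set.indicator_apply, Set.mem_setOf_eq]
    exact apAux_tail_ptwise hp dist_nonneg dist_nonneg dist_nonneg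
      (dist_triangle _ _ _) hC₀ hCB
  rw [integral_add (hb.const_mul _) ((hZx.indicator hsZ).const_mul _),
    integral_const_mul, integral_const_mul, integral_indicator hsZ] at key
  have h2p : (0:ℝ) ≤ 2 ^ p := Real.rpow_nonneg (by norm_num) p
  calc ∫ ω, Set.indicator {ω | 2*B ≤ dist (Y ω) x₀} (fun ω => dist (Y ω) x₀ ^ p) ω ∂P
      ≤ 2 ^ p * ∫ ω, dist (Y ω) (Z ω) ^ p ∂P
        + 2 ^ p * ∫ ω in {ω | C₀ ≤ dist (Z ω) x₀}, dist (Z ω) x₀ ^ p ∂P := key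
    _ ≤ 2 ^ p * r + 2 ^ p * η := by
        have e1 := mul_le_mul_of_nonneg_left hr h2p
        have e2 := mul_le_mul_of_nonneg_left htail h2p
        linarith

lemma apAux_d0_to_dp (hp : 1 ≤ p) (x₀ : E) {Y Z : Ω → E} (hY : Measurable Y) (hZ : Measurable Z)
    (hYx : Integrable (fun ω => dist (Y ω) x₀ ^ p) P)
    (hZx : Integrable (fun ω => dist (Z ω) x₀ ^ p) P)
    (hD : Integrable (fun ω => dist (Y ω) (Z ω) ^ p) P)
    {ε C : ℝ} (hε : 0 < ε) (hC : 1 ≤ C)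
    (htY : ∫ ω in {ω | C ≤ dist (Y ω) x₀}, dist (Y ω) x₀ ^ p ∂P ≤ ε^p/(3*(2*2^p)))
    (htZ : ∫ ω in {ω | C ≤ dist (Z ω) x₀}, dist (Z ω) x₀ ^ p ∂P ≤ ε^p/(3*(2*2^p)))
    (hd0 : d0 P Y Z ≤ ε^p * min (ε/3) 1 / (3*(2*2^p)*C^p)) :
    dp P p Y Z ≤ ε := by
  have hp0 : (0:ℝ) ≤ p := by linarith
  set δ : ℝ := ε/3 with hδdef
  have hδ : 0 < δ := by positivity
  have hmδ : 0 < min δ 1 := lt_min hδ one_pos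
  have h2p : (0:ℝ) < 2 ^ p := Real.rpow_pos_of_pos two_pos p
  have hCp : (0:ℝ) < C ^ p := Real.rpow_pos_of_pos (by linarith) p
  set coef : ℝ := 2 ^ p * (2 * C ^ p) / min δ 1 with hcoef
  have hcoefpos : 0 < coef := by positivity
  have hsY : MeasurableSet {ω | C ≤ dist (Y ω) x₀} :=
    measurableSet_le measurable_const (hY.dist measurable_const)
  have hsZ : MeasurableSet {ω | C ≤ dist (Z ω) x₀} :=
    measurableSet_le measurable_const (hZ.dist measurable_const)
  set indY : Ω → ℝ :=
    fun ω => Set.indicator {ω | C ≤ dist (Y ω) x₀} (fun ω => dist (Y ω) x₀ ^ p) ω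
  set indZ : Ω → ℝ :=
    fun ω => Set.indicator {ω | C ≤ dist (Z ω) x₀} (fun ω => dist (Z ω) x₀ ^ p) ω
  have hiY : Integrable indY P := hYx.indicator hsY
  have hiZ : Integrable indZ P := hZx.indicator hsZ
  have himin : Integrable (fun ω => min (dist (Y ω) (Z ω)) 1) P :=
    apAux_integrable_min_dist hY hZ
  have i1 : Integrable (fun ω => 2 ^ p * indY ω) P := hiY.const_mul _
  have i2 : Integrable (fun ω => 2 ^ p * indZ ω) P := hiZ.const_mul _
  have i3 : Integrable (fun ω => coef * min (dist (Y ω) (Z ω)) 1) P := himin.const_mul _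
  have i23 : Integrable (fun ω => 2 ^ p * indZ ω + coef * min (dist (Y ω) (Z ω)) 1) P :=
    i2.add i3
  have i123 : Integrable (fun ω => 2 ^ p * indY ω
      + (2 ^ p * indZ ω + coef * min (dist (Y ω) (Z ω)) 1)) P := i1.add i23
  have i0123 : Integrable (fun ω => δ ^ p + (2 ^ p * indY ω
      + (2 ^ p * indZ ω + coef * min (dist (Y ω) (Z ω)) 1))) P := (integrable_const _).add i123
  have step : ∫ ω, dist (Y ω) (Z ω) ^ p ∂P
      ≤ ∫ ω, (δ ^ p + (2 ^ p * indY ω + (2 ^ p * indZ ω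
          + coef * min (dist (Y ω) (Z ω)) 1))) ∂P := by
    refine integral_mono hD i0123 fun ω => ?_
    have key := apAux_vitali_ptwise (p := p) (a := dist (Y ω) x₀) (c := dist (Z ω) x₀)
        (D := dist (Y ω) (Z ω)) (C := C) (δ := δ) hp dist_nonneg dist_nonneg dist_nonneg
        (dist_triangle_right _ _ _) hC hδ
    have heq : δ ^ p + 2 ^ p * ((if C ≤ dist (Y ω) x₀ then dist (Y ω) x₀ ^ p else 0)
            + (if C ≤ dist (Z ω) x₀ then dist (Z ω) x₀ ^ p else 0)
            + 2 * C ^ p * (min (dist (Y ω) (Z ω)) 1 / min δ 1))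
          = δ ^ p + (2 ^ p * (if C ≤ dist (Y ω) x₀ then dist (Y ω) x₀ ^ p else 0)
            + (2 ^ p * (if C ≤ dist (Z ω) x₀ then dist (Z ω) x₀ ^ p else 0)
            + coef * min (dist (Y ω) (Z ω)) 1)) := by
      rw [hcoef]; ring
    rw [heq] at key
    simpa only [indY, indZ, Set.indicator_apply, Set.mem_setOf_eq] using key
  have hIadd : ∫ ω, (δ ^ p + (2 ^ p * indY ω + (2 ^ p * indZ ω
      + coef * min (dist (Y ω) (Z ω)) 1))) ∂P
      = δ ^ p + (2 ^ p * (∫ ω, indY ω ∂P) + (2 ^ p * (∫ ω, indZ ω ∂P) + coef * d0 P Y Z)) := by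
    rw [integral_add (integrable_const _) i123, integral_add i1 i23, integral_add i2 i3,
      integral_const, integral_const_mul, integral_const_mul, integral_const_mul]
    simp [d0]
  have hTY : ∫ ω, indY ω ∂P ≤ ε^p/(3*(2*2^p)) := by
    rw [integral_indicator hsY]; exact htY
  have hTZ : ∫ ω, indZ ω ∂P ≤ ε^p/(3*(2*2^p)) := by
    rw [integral_indicator hsZ]; exact htZ
  have hd0' : coef * d0 P Y Z ≤ ε^p/3 := by
    have h1 : coef * d0 P Y Z ≤ coef * (ε^p * min (ε/3) 1 / (3*(2*2^p)*C^p)) :=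
      mul_le_mul_of_nonneg_left hd0 hcoefpos.le
    have h2 : coef * (ε^p * min (ε/3) 1 / (3*(2*2^p)*C^p)) = ε^p/3 := by
      rw [hcoef, hδdef]
      field_simp
    linarith
  have hδp : δ ^ p ≤ ε^p/3 := by
    have h1 : δ ^ p = ε ^ p / 3 ^ p := by
      rw [hδdef, Real.div_rpow hε.le (by norm_num)]
    have h2 : (3:ℝ) ≤ 3 ^ p := by
      calc (3:ℝ) = 3 ^ (1:ℝ) := (Real.rpow_one 3).symm
        _ ≤ 3 ^ p := Real.rpow_le_rpow_of_exponent_le (by norm_num) hp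
    rw [h1]
    exact div_le_div_of_nonneg_left (Real.rpow_nonneg hε.le p) (by norm_num) h2
  have hfinal : ∫ ω, dist (Y ω) (Z ω) ^ p ∂P ≤ ε ^ p := by
    have e1 : 2 ^ p * (∫ ω, indY ω ∂P) ≤ 2 ^ p * (ε^p/(3*(2*2^p))) :=
      mul_le_mul_of_nonneg_left hTY h2p.le
    have e2 : 2 ^ p * (∫ ω, indZ ω ∂P) ≤ 2 ^ p * (ε^p/(3*(2*2^p))) :=
      mul_le_mul_of_nonneg_left hTZ h2p.le
    have e3 : 2 ^ p * (ε^p/(3*(2*2^p))) = ε^p/6 := by field_simp; ring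
    rw [hIadd] at step
    rw [e3] at e1 e2
    linarith
  calc dp P p Y Z = ((∫ ω, dist (Y ω) (Z ω) ^ p ∂P) ^ (1/p)) := rfl
    _ ≤ (ε ^ p) ^ (1/p) :=
        Real.rpow_le_rpow (apAux_intD_nonneg Y Z) hfinal (by positivity)
    _ = ε := by
        rw [← Real.rpow_mul hε.le, mul_one_div_cancel (by linarith : p ≠ 0), Real.rpow_one]

end APAux


/-- `X` is `θ`-almost periodic in `p`-mean iff it is `θ`-almost periodic in
probability and the family `dist(X(t,·),x₀)^p`, `t ∈ ℝ`, is uniformly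
integrable. -/
theorem thetaAlmostPeriodicP_iff
    [PolishSpace E] [MeasurableSpace E] [BorelSpace E]
    (P : Measure Ω) [IsProbabilityMeasure P] (θ : ℝ → Ω → Ω)
    (hmp : ∀ s : ℝ, MeasurePreserving (θ s) P P)
    (hθ0 : θ 0 = id) (hθadd : ∀ s t : ℝ, θ (s + t) = θ s ∘ θ t)
    (p : ℝ) (hp : 1 ≤ p) (x₀ : E)
    (X : ℝ → Ω → E) (hXm : ∀ t : ℝ, Measurable (X t))
    (hInt : ∀ t : ℝ, Integrable (fun ω => dist (X t ω) x₀ ^ p) P) :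
    ThetaAlmostPeriodicP P θ p X ↔
      (ThetaAlmostPeriodic P θ X ∧
        ∀ ε > 0, ∃ C : ℝ, ∀ t : ℝ,
          ∫ ω in {ω | C ≤ dist (X t ω) x₀}, dist (X t ω) x₀ ^ p ∂P ≤ ε) := by
  have hp0 : (0:ℝ) ≤ p := by linarith
  have hXm' : ∀ u s : ℝ, Measurable (fun ω => X u (θ s ω)) :=
    fun u s => (hXm u).comp (hmp s).measurable
  have hInt' : ∀ u s : ℝ, Integrable (fun ω => dist (X u (θ s ω)) x₀ ^ p) P :=
    fun u s => apAux_integrable_comp (hmp s) (hInt u)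
  have htail' : ∀ u s C : ℝ,
      ∫ ω in {ω | C ≤ dist (X u (θ s ω)) x₀}, dist (X u (θ s ω)) x₀ ^ p ∂P
        = ∫ ω in {ω | C ≤ dist (X u ω) x₀}, dist (X u ω) x₀ ^ p ∂P :=
    fun u s C => apAux_tail_comp (hmp s) ((hXm u).dist measurable_const) C
  have hzero : ∀ t' : ℝ, (fun ω => X (t' + 0) (θ (-0) ω)) = X t' := by
    intro t'
    funext ω
    rw [add_zero, neg_zero, hθ0]
    rfl
  constructor
  · rintro ⟨hcontP, hperP⟩
    refine ⟨⟨?_, ?_⟩, ?_⟩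
    · -- continuity in probability
      intro t s ε hε
      obtain ⟨δ, hδ, hc⟩ := hcontP t s (min ε 1 / 2 * (min ε 1 / 2)) (by positivity)
      refine ⟨δ, hδ, fun t' s' h1 h2 => ?_⟩
      exact apAux_d0_le_of_dp hp (hXm' _ _) (hXm' _ _)
        (apAux_int_dist_pow hp x₀ (hXm' _ _) (hXm' _ _) (hInt' _ _) (hInt' _ _)) hε
        (hc t' s' h1 h2)
    · -- almost periods in probability
      intro ε hε
      refine apAux_reldense_mono ?_ (hperP (min ε 1 / 2 * (min ε 1 / 2)) (by positivity))
      intro τ hτ t₁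
      exact apAux_d0_le_of_dp hp (hXm' _ _) (hXm t₁)
        (apAux_int_dist_pow hp x₀ (hXm' _ _) (hXm t₁) (hInt' _ _) (hInt t₁)) hε (hτ t₁)
    · -- uniform integrability
      intro ε hε
      set ε' : ℝ := min (ε/2) 1 / 4 with hε'def
      have hminpos : 0 < min (ε/2) 1 := lt_min (by positivity) one_pos
      have hε'pos : 0 < ε' := by rw [hε'def]; positivity
      set η : ℝ := ε / (2 * 2 ^ p) with hηdef
      have h2p : (0:ℝ) < 2 ^ p := Real.rpow_pos_of_pos two_pos p
      have hηpos : 0 < η := by rw [hηdef]; positivity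
      obtain ⟨l, hl, hrel⟩ := hperP ε' hε'pos
      choose δf hδf hcont using fun s : ℝ => hcontP s 0 ε' hε'pos
      obtain ⟨F, hF⟩ := isCompact_Icc.elim_finite_subcover
        (fun s : ℝ => Metric.ball s (δf s)) (fun s => Metric.isOpen_ball)
        (fun s hs => Set.mem_iUnion.2 ⟨s, Metric.mem_ball_self (hδf s)⟩)
      choose Cf hCf1 hCf2 using fun i : ℝ => apAux_tail_single hp x₀ (hXm i) (hInt i) hηpos
      have h0mem : (0:ℝ) ∈ Set.Icc (0:ℝ) l := ⟨le_rfl, hl.le⟩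
      obtain ⟨i₀, hi₀F, _⟩ := Set.mem_iUnion₂.mp (hF h0mem)
      have hFne : F.Nonempty := ⟨i₀, hi₀F⟩
      set B : ℝ := F.sup' hFne Cf with hBdef
      have hB1 : (1:ℝ) ≤ B := le_trans (hCf1 i₀) (Finset.le_sup' Cf hi₀F)
      refine ⟨2 * B, fun t => ?_⟩
      obtain ⟨τ, hτ, hτI⟩ := hrel (t - l)
      have hsmem : t - τ ∈ Set.Icc (0:ℝ) l := by
        obtain ⟨ha1, ha2⟩ := hτI
        exact ⟨by linarith, by linarith⟩
      have hst : t - τ + τ = t := by ring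
      have hdp1 : dp P p (fun ω => X t (θ (-τ) ω)) (X (t - τ)) ≤ ε' := by
        have h := hτ (t - τ)
        rw [hst] at h
        exact h
      obtain ⟨i, hiF, hsball⟩ := Set.mem_iUnion₂.mp (hF hsmem)
      rw [Metric.mem_ball, Real.dist_eq] at hsball
      have hdp2 : dp P p (X (t - τ)) (X i) ≤ ε' := by
        have h := hcont i (t - τ) 0 hsball (by simpa using hδf i)
        rwa [hzero (t - τ), hzero i] at h
      have hYm : Measurable (fun ω => X t (θ (-τ) ω)) := hXm' t (-τ)
      have hint1 : Integrable (fun ω => dist (X t (θ (-τ) ω)) (X (t - τ) ω) ^ p) P :=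
        apAux_int_dist_pow hp x₀ hYm (hXm _) (hInt' t (-τ)) (hInt _)
      have hint2 : Integrable (fun ω => dist (X (t - τ) ω) (X i ω) ^ p) P :=
        apAux_int_dist_pow hp x₀ (hXm _) (hXm i) (hInt _) (hInt i)
      have hdp3 : dp P p (fun ω => X t (θ (-τ) ω)) (X i) ≤ 2 * ε' := by
        calc dp P p (fun ω => X t (θ (-τ) ω)) (X i)
            ≤ dp P p (fun ω => X t (θ (-τ) ω)) (X (t - τ)) + dp P p (X (t - τ)) (X i) :=
              apAux_dp_triangle hp hYm (hXm _) (hXm i) hint1 hint2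
          _ ≤ 2 * ε' := by linarith
      have hintYI : Integrable (fun ω => dist (X t (θ (-τ) ω)) (X i ω) ^ p) P :=
        apAux_int_dist_pow hp x₀ hYm (hXm i) (hInt' t (-τ)) (hInt i)
      have hIb : ∫ ω, dist (X t (θ (-τ) ω)) (X i ω) ^ p ∂P ≤ (2*ε') ^ p := by
        have h1 : dp P p (fun ω => X t (θ (-τ) ω)) (X i) ^ p
            = ∫ ω, dist (X t (θ (-τ) ω)) (X i ω) ^ p ∂P := apAux_dp_pow hp _ _
        rw [← h1]
        exact Real.rpow_le_rpow (apAux_dp_nonneg _ _) hdp3 hp0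
      have htailest := apAux_tail_est hp x₀ hYm (hXm i) (hInt' t (-τ)) (hInt i) hintYI
        (le_trans zero_le_one (hCf1 i)) (Finset.le_sup' Cf hiF) hIb (hCf2 i)
      rw [htail' t (-τ) (2*B)] at htailest
      refine htailest.trans ?_
      have harith1 : 2 ^ p * (2*ε') ^ p ≤ ε/2 := by
        rw [← Real.mul_rpow (by norm_num) (by positivity)]
        have h4 : 2 * (2 * ε') = min (ε/2) 1 := by rw [hε'def]; ring
        rw [h4]
        calc (min (ε/2) 1) ^ p ≤ (min (ε/2) 1) ^ (1:ℝ) :=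
              Real.rpow_le_rpow_of_exponent_ge hminpos (min_le_right _ _) hp
          _ = min (ε/2) 1 := Real.rpow_one _
          _ ≤ ε/2 := min_le_left _ _
      have harith2 : 2 ^ p * η = ε/2 := by
        rw [hηdef]
        field_simp
      linarith
  · rintro ⟨⟨hcont0, hper0⟩, hUI⟩
    have hUI' : ∀ η : ℝ, 0 < η → ∃ C : ℝ, 1 ≤ C ∧ ∀ t : ℝ,
        ∫ ω in {ω | C ≤ dist (X t ω) x₀}, dist (X t ω) x₀ ^ p ∂P ≤ η := by
      intro η hη
      obtain ⟨C₀, hC₀⟩ := hUI η hη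
      refine ⟨max C₀ 1, le_max_right _ _, fun t => ?_⟩
      exact (apAux_tail_mono x₀ (hXm t) (hInt t) (le_max_left _ _)).trans (hC₀ t)
    constructor
    · -- continuity in p-mean
      intro t s ε hε
      have hεp : (0:ℝ) < ε ^ p := Real.rpow_pos_of_pos hε p
      have h2p : (0:ℝ) < 2 ^ p := Real.rpow_pos_of_pos two_pos p
      obtain ⟨C, hC1, hCt⟩ := hUI' (ε^p/(3*(2*2^p))) (by positivity)
      have hCp : (0:ℝ) < C ^ p := Real.rpow_pos_of_pos (by linarith) p
      have hκpos : 0 < ε^p * min (ε/3) 1 / (3*(2*2^p)*C^p) := by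
        apply div_pos (mul_pos hεp (lt_min (by positivity) one_pos))
        positivity
      obtain ⟨δ, hδ, hc⟩ := hcont0 t s _ hκpos
      refine ⟨δ, hδ, fun t' s' h1 h2 => ?_⟩
      refine apAux_d0_to_dp hp x₀ (hXm' _ _) (hXm' _ _) (hInt' _ _) (hInt' _ _)
        (apAux_int_dist_pow hp x₀ (hXm' _ _) (hXm' _ _) (hInt' _ _) (hInt' _ _))
        hε hC1 ?_ ?_ (hc t' s' h1 h2)
      · rw [htail' (t' + s') (-s') C]
        exact hCt _
      · rw [htail' (t + s) (-s) C]
        exact hCt _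
    · -- almost periods in p-mean
      intro ε hε
      have hεp : (0:ℝ) < ε ^ p := Real.rpow_pos_of_pos hε p
      have h2p : (0:ℝ) < 2 ^ p := Real.rpow_pos_of_pos two_pos p
      obtain ⟨C, hC1, hCt⟩ := hUI' (ε^p/(3*(2*2^p))) (by positivity)
      have hCp : (0:ℝ) < C ^ p := Real.rpow_pos_of_pos (by linarith) p
      have hκpos : 0 < ε^p * min (ε/3) 1 / (3*(2*2^p)*C^p) := by
        apply div_pos (mul_pos hεp (lt_min (by positivity) one_pos))
        positivity
      refine apAux_reldense_mono ?_ (hper0 _ hκpos)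
      intro τ hτ t₁
      refine apAux_d0_to_dp hp x₀ (hXm' _ _) (hXm t₁) (hInt' _ _) (hInt t₁)
        (apAux_int_dist_pow hp x₀ (hXm' _ _) (hXm t₁) (hInt' _ _) (hInt t₁))
        hε hC1 ?_ ?_ (hτ t₁)
      · rw [htail' (t₁ + τ) (-τ) C]
        exact hCt _
      · exact hCt _
end
end
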